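/- For a single-input, single-output network of depth L whose layers each apply one affine map followed by a piecewise linear activation with at most k pieces, the composed function ℝ → ℝ is piecewise linear with at most k^L pieces. -/
import Mathlib


/-- `f` is piecewise linear with at most `m` affine pieces on intervals partitioning `ℝ`. -/
def PiecewiseLinearWith (f : ℝ → ℝ) (m : ℕ) : Prop :=
  ∃ P : Finset (Set ℝ), P.card ≤ m ∧
    (⋃₀ (P : Set (Set ℝ)) = Set.univ) ∧
    ((P : Set (Set ℝ)).Pairwise Disjoint) ∧
    (∀ I ∈ P, I.OrdConnected) ∧
    (∀ I ∈ P, ∃ a b : ℝ, ∀ x ∈ I, f x = a * x + b)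

lemma plw_affine {f : ℝ → ℝ} {m : ℕ} (hf : PiecewiseLinearWith f m) (w c : ℝ) :
    PiecewiseLinearWith (fun x => w * f x + c) m := by
  obtain ⟨P, h1, h2, h3, h4, h5⟩ := hf
  refine ⟨P, h1, h2, h3, h4, fun I hI => ?_⟩
  obtain ⟨a, b, hab⟩ := h5 I hI
  exact ⟨w * a, w * b + c, fun x hx => by show w * f x + c = _; rw [hab x hx]; ring⟩

lemma plw_comp {f g : ℝ → ℝ} {m k : ℕ} (hf : PiecewiseLinearWith f m)
    (hg : PiecewiseLinearWith g k) :
    PiecewiseLinearWith (fun x => g (f x)) (m * k) := by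
  classical
  obtain ⟨P, hPc, hPu, hPd, hPo, hPa⟩ := hf
  obtain ⟨Q, hQc, hQu, hQd, hQo, hQa⟩ := hg
  refine ⟨(P ×ˢ Q).image (fun p => p.1 ∩ f ⁻¹' p.2), ?_, ?_, ?_, ?_, ?_⟩
  · calc ((P ×ˢ Q).image (fun p => p.1 ∩ f ⁻¹' p.2)).card ≤ (P ×ˢ Q).card :=
        Finset.card_image_le
      _ = P.card * Q.card := Finset.card_product P Q
      _ ≤ m * k := Nat.mul_le_mul hPc hQc
  · ext x
    simp only [Set.mem_sUnion, Set.mem_univ, iff_true, Finset.coe_image, Set.mem_image,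
      Finset.mem_coe, Finset.mem_product]
    have hx : x ∈ ⋃₀ (P : Set (Set ℝ)) := hPu ▸ Set.mem_univ x
    have hfx : f x ∈ ⋃₀ (Q : Set (Set ℝ)) := hQu ▸ Set.mem_univ (f x)
    obtain ⟨I, hI, hxI⟩ := hx
    obtain ⟨J, hJ, hxJ⟩ := hfx
    exact ⟨I ∩ f ⁻¹' J, ⟨⟨I, J⟩, ⟨hI, hJ⟩, rfl⟩, hxI, hxJ⟩
  · intro S hS T hT hne
    simp only [Finset.coe_image, Set.mem_image, Finset.mem_coe, Finset.mem_product] at hS hT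
    obtain ⟨⟨I, J⟩, ⟨hI, hJ⟩, rfl⟩ := hS
    obtain ⟨⟨I', J'⟩, ⟨hI', hJ'⟩, rfl⟩ := hT
    rw [Set.disjoint_left]
    rintro x ⟨hxI, hxJ⟩ ⟨hxI', hxJ'⟩
    have hII : I = I' := by
      by_contra h
      exact Set.disjoint_left.1 (hPd hI hI' h) hxI hxI'
    have hJJ : J = J' := by
      by_contra h
      exact Set.disjoint_left.1 (hQd hJ hJ' h) hxJ hxJ'
    exact hne (by rw [hII, hJJ])
  · intro S hS
    simp only [Finset.mem_image, Finset.mem_product] at hS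
    obtain ⟨⟨I, J⟩, ⟨hI, hJ⟩, rfl⟩ := hS
    obtain ⟨a, b, hab⟩ := hPa I hI
    constructor
    rintro x ⟨hxI, hxJ⟩ y ⟨hyI, hyJ⟩ z hz
    have hzI : z ∈ I := (hPo I hI).out hxI hyI hz
    refine ⟨hzI, ?_⟩
    have h1 : f z ∈ Set.uIcc (f x) (f y) := by
      rw [hab x hxI, hab y hyI, hab z hzI, Set.mem_uIcc]
      rcases le_or_gt 0 a with ha | ha
      · left; constructor <;> nlinarith [hz.1, hz.2]
      · right; constructor <;> nlinarith [hz.1, hz.2]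
    exact (hQo J hJ).uIcc_subset hxJ hyJ h1
  · intro S hS
    simp only [Finset.mem_image, Finset.mem_product] at hS
    obtain ⟨⟨I, J⟩, ⟨hI, hJ⟩, rfl⟩ := hS
    obtain ⟨a, b, hab⟩ := hPa I hI
    obtain ⟨a', b', hab'⟩ := hQa J hJ
    refine ⟨a' * a, a' * b + b', ?_⟩
    rintro x ⟨hxI, hxJ⟩
    show g (f x) = _
    rw [hab' (f x) hxJ, hab x hxI]
    ring

theorem network_at_most_k_pow_L_pieces (L k : ℕ)
    (σ : ℕ → ℝ → ℝ) (w c : ℕ → ℝ)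
    (hσ : ∀ i < L, PiecewiseLinearWith (σ i) k)
    (net : ℕ → ℝ → ℝ)
    (hnet0 : net 0 = id)
    (hnet : ∀ i < L, net (i + 1) = fun x => σ i (w i * net i x + c i)) :
    PiecewiseLinearWith (net L) (k ^ L) := by
  suffices h : ∀ i, i ≤ L → PiecewiseLinearWith (net i) (k ^ i) from h L le_rfl
  intro i
  induction i with
  | zero =>
    intro _
    refine ⟨{Set.univ}, by simp, by simp, by simp, by simp [Set.ordConnected_univ], ?_⟩
    intro I hI
    simp only [Finset.mem_singleton] at hI
    subst hI
    exact ⟨1, 0, fun x _ => by simp [hnet0]⟩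
  | succ i ih =>
    intro hiL
    have hi : i < L := hiL
    rw [hnet i hi, pow_succ]
    exact plw_comp (plw_affine (ih (le_of_lt hi)) (w i) (c i)) (hσ i hi)
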